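/- The inner translations K6 and K7 are equivalent in minimal logic: ML ⊢ A^{K6} ↔ A^{K7} for every formula A, where K6 translates (A→B) to (A^{K6} → ¬¬B^{K6}) and K7 translates (A→B) to (¬B^{K7} → ¬A^{K7}), both acting as the Kuroda inner translation on the other connectives and quantifiers. -/
import Mathlib


/-- First-order formulas over domain `α`, with HOAS quantifiers.
`bot` is an ordinary atom with no special rules in minimal logic. -/
inductive Formula (α : Type) : Type where
  | atom : ℕ → List α → Formula α
  | bot : Formula α
  | and : Formula α → Formula α → Formula α
  | or : Formula α → Formula α → Formula α
  | imp : Formula α → Formula α → Formula α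
  | all : (α → Formula α) → Formula α
  | ex : (α → Formula α) → Formula α

/-- Negation: `¬A ≡ A → ⊥`. -/
def Formula.neg {α : Type} (A : Formula α) : Formula α := A.imp .bot

/-- Biconditional. -/
def Formula.iff {α : Type} (A B : Formula α) : Formula α := (A.imp B).and (B.imp A)

/-- Minimal first-order logic: natural deduction without ex falso quodlibet. -/
inductive ML {α : Type} : Set (Formula α) → Formula α → Prop where
  | ax {Γ : Set (Formula α)} {A : Formula α} : A ∈ Γ → ML Γ A
  | impI {Γ : Set (Formula α)} {A B : Formula α} : ML (insert A Γ) B → ML Γ (A.imp B)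
  | impE {Γ : Set (Formula α)} {A B : Formula α} : ML Γ (A.imp B) → ML Γ A → ML Γ B
  | andI {Γ : Set (Formula α)} {A B : Formula α} : ML Γ A → ML Γ B → ML Γ (A.and B)
  | andE1 {Γ : Set (Formula α)} {A B : Formula α} : ML Γ (A.and B) → ML Γ A
  | andE2 {Γ : Set (Formula α)} {A B : Formula α} : ML Γ (A.and B) → ML Γ B
  | orI1 {Γ : Set (Formula α)} {A B : Formula α} : ML Γ A → ML Γ (A.or B)
  | orI2 {Γ : Set (Formula α)} {A B : Formula α} : ML Γ B → ML Γ (A.or B)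
  | orE {Γ : Set (Formula α)} {A B C : Formula α} : ML Γ (A.or B) → ML (insert A Γ) C → ML (insert B Γ) C → ML Γ C
  | allI {Γ : Set (Formula α)} {f : α → Formula α} : (∀ a, ML Γ (f a)) → ML Γ (.all f)
  | allE {Γ f} (a : α) : ML Γ (.all f) → ML Γ (f a)
  | exI {Γ f} (a : α) : ML Γ (f a) → ML Γ (.ex f)
  | exE {Γ : Set (Formula α)} {f : α → Formula α} {C : Formula α} : ML Γ (.ex f) → (∀ a, ML (insert (f a) Γ) C) → ML Γ C

/-- Intuitionistic first-order logic: minimal logic plus ex falso quodlibet. -/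
inductive IL {α : Type} : Set (Formula α) → Formula α → Prop where
  | ax {Γ : Set (Formula α)} {A : Formula α} : A ∈ Γ → IL Γ A
  | impI {Γ : Set (Formula α)} {A B : Formula α} : IL (insert A Γ) B → IL Γ (A.imp B)
  | impE {Γ : Set (Formula α)} {A B : Formula α} : IL Γ (A.imp B) → IL Γ A → IL Γ B
  | andI {Γ : Set (Formula α)} {A B : Formula α} : IL Γ A → IL Γ B → IL Γ (A.and B)
  | andE1 {Γ : Set (Formula α)} {A B : Formula α} : IL Γ (A.and B) → IL Γ A
  | andE2 {Γ : Set (Formula α)} {A B : Formula α} : IL Γ (A.and B) → IL Γ B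
  | orI1 {Γ : Set (Formula α)} {A B : Formula α} : IL Γ A → IL Γ (A.or B)
  | orI2 {Γ : Set (Formula α)} {A B : Formula α} : IL Γ B → IL Γ (A.or B)
  | orE {Γ : Set (Formula α)} {A B C : Formula α} : IL Γ (A.or B) → IL (insert A Γ) C → IL (insert B Γ) C → IL Γ C
  | allI {Γ : Set (Formula α)} {f : α → Formula α} : (∀ a, IL Γ (f a)) → IL Γ (.all f)
  | allE {Γ f} (a : α) : IL Γ (.all f) → IL Γ (f a)
  | exI {Γ f} (a : α) : IL Γ (f a) → IL Γ (.ex f)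
  | exE {Γ : Set (Formula α)} {f : α → Formula α} {C : Formula α} : IL Γ (.ex f) → (∀ a, IL (insert (f a) Γ) C) → IL Γ C
  | efq {Γ : Set (Formula α)} {A : Formula α} : IL Γ .bot → IL Γ A

/-- Classical first-order logic: minimal logic plus double negation elimination. -/
inductive CL {α : Type} : Set (Formula α) → Formula α → Prop where
  | ax {Γ : Set (Formula α)} {A : Formula α} : A ∈ Γ → CL Γ A
  | impI {Γ : Set (Formula α)} {A B : Formula α} : CL (insert A Γ) B → CL Γ (A.imp B)
  | impE {Γ : Set (Formula α)} {A B : Formula α} : CL Γ (A.imp B) → CL Γ A → CL Γ B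
  | andI {Γ : Set (Formula α)} {A B : Formula α} : CL Γ A → CL Γ B → CL Γ (A.and B)
  | andE1 {Γ : Set (Formula α)} {A B : Formula α} : CL Γ (A.and B) → CL Γ A
  | andE2 {Γ : Set (Formula α)} {A B : Formula α} : CL Γ (A.and B) → CL Γ B
  | orI1 {Γ : Set (Formula α)} {A B : Formula α} : CL Γ A → CL Γ (A.or B)
  | orI2 {Γ : Set (Formula α)} {A B : Formula α} : CL Γ B → CL Γ (A.or B)
  | orE {Γ : Set (Formula α)} {A B C : Formula α} : CL Γ (A.or B) → CL (insert A Γ) C → CL (insert B Γ) C → CL Γ C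
  | allI {Γ : Set (Formula α)} {f : α → Formula α} : (∀ a, CL Γ (f a)) → CL Γ (.all f)
  | allE {Γ f} (a : α) : CL Γ (.all f) → CL Γ (f a)
  | exI {Γ f} (a : α) : CL Γ (f a) → CL Γ (.ex f)
  | exE {Γ : Set (Formula α)} {f : α → Formula α} {C : Formula α} : CL Γ (.ex f) → (∀ a, CL (insert (f a) Γ) C) → CL Γ C
  | dne {Γ : Set (Formula α)} {A : Formula α} : CL Γ A.neg.neg → CL Γ A

/-- Inner translation of K6: `(A → B)` goes to `A^{K6} → ¬¬B^{K6}`, otherwise as Kuroda. -/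
def kurodaSix {α : Type} : Formula α → Formula α
  | .atom n ts => Formula.atom n ts
  | .bot => Formula.bot
  | .and A B => (kurodaSix A).and (kurodaSix B)
  | .or A B => (kurodaSix A).or (kurodaSix B)
  | .imp A B => (kurodaSix A).imp (kurodaSix B).neg.neg
  | .all f => .all (fun a => (kurodaSix (f a)).neg.neg)
  | .ex f => .ex (fun a => kurodaSix (f a))

/-- Inner translation of K7: `(A → B)` goes to `¬B^{K7} → ¬A^{K7}`, otherwise as Kuroda. -/
def kurodaSeven {α : Type} : Formula α → Formula α
  | .atom n ts => Formula.atom n ts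
  | .bot => Formula.bot
  | .and A B => (kurodaSeven A).and (kurodaSeven B)
  | .or A B => (kurodaSeven A).or (kurodaSeven B)
  | .imp A B => (kurodaSeven B).neg.imp (kurodaSeven A).neg
  | .all f => .all (fun a => (kurodaSeven (f a)).neg.neg)
  | .ex f => .ex (fun a => kurodaSeven (f a))


namespace ML

variable {α : Type}

lemma weaken {Γ Δ : Set (Formula α)} {A : Formula α} (h : ML Γ A) (s : Γ ⊆ Δ) : ML Δ A := by
  induction h generalizing Δ with
  | ax h => exact .ax (s h)
  | impI _ ih => exact .impI (ih (Set.insert_subset_insert s))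
  | impE _ _ ih1 ih2 => exact .impE (ih1 s) (ih2 s)
  | andI _ _ ih1 ih2 => exact .andI (ih1 s) (ih2 s)
  | andE1 _ ih => exact .andE1 (ih s)
  | andE2 _ ih => exact .andE2 (ih s)
  | orI1 _ ih => exact .orI1 (ih s)
  | orI2 _ ih => exact .orI2 (ih s)
  | orE _ _ _ ih ih1 ih2 =>
      exact .orE (ih s) (ih1 (Set.insert_subset_insert s)) (ih2 (Set.insert_subset_insert s))
  | allI _ ih => exact .allI (fun a => ih a s)
  | allE a _ ih => exact .allE a (ih s)
  | exI a _ ih => exact .exI a (ih s)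
  | exE _ _ ih ihs => exact .exE (ih s) (fun a => ihs a (Set.insert_subset_insert s))

lemma weaken1 {Γ : Set (Formula α)} {A B : Formula α} (h : ML Γ A) : ML (insert B Γ) A :=
  h.weaken (Set.subset_insert _ _)

lemma hyp0 {Γ : Set (Formula α)} {A : Formula α} : ML (insert A Γ) A :=
  .ax (Set.mem_insert _ _)

lemma hyp1 {Γ : Set (Formula α)} {A B : Formula α} : ML (insert B (insert A Γ)) A :=
  weaken1 hyp0

lemma hyp2 {Γ : Set (Formula α)} {A B C : Formula α} : ML (insert C (insert B (insert A Γ))) A :=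
  weaken1 hyp1

lemma iffI {Γ : Set (Formula α)} {A B : Formula α} (h1 : ML Γ (A.imp B)) (h2 : ML Γ (B.imp A)) :
    ML Γ (A.iff B) := .andI h1 h2

lemma iffE1 {Γ : Set (Formula α)} {A B : Formula α} (h : ML Γ (A.iff B)) : ML Γ (A.imp B) :=
  .andE1 h

lemma iffE2 {Γ : Set (Formula α)} {A B : Formula α} (h : ML Γ (A.iff B)) : ML Γ (B.imp A) :=
  .andE2 h

lemma imp_trans {Γ : Set (Formula α)} {A B C : Formula α} (h1 : ML Γ (A.imp B))
    (h2 : ML Γ (B.imp C)) : ML Γ (A.imp C) :=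
  .impI (.impE (weaken1 h2) (.impE (weaken1 h1) hyp0))

lemma iff_trans {Γ : Set (Formula α)} {A B C : Formula α} (h1 : ML Γ (A.iff B))
    (h2 : ML Γ (B.iff C)) : ML Γ (A.iff C) :=
  iffI (imp_trans (iffE1 h1) (iffE1 h2)) (imp_trans (iffE2 h2) (iffE2 h1))

lemma iff_refl {Γ : Set (Formula α)} {A : Formula α} : ML Γ (A.iff A) :=
  iffI (.impI hyp0) (.impI hyp0)

lemma imp_mono {Γ : Set (Formula α)} {A A' B B' : Formula α} (hA : ML Γ (A'.imp A))
    (hB : ML Γ (B.imp B')) : ML Γ ((A.imp B).imp (A'.imp B')) :=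
  .impI (.impI (.impE (weaken1 (weaken1 hB)) (.impE hyp1 (.impE (weaken1 (weaken1 hA)) hyp0))))

lemma imp_congr {Γ : Set (Formula α)} {A A' B B' : Formula α} (hA : ML Γ (A.iff A'))
    (hB : ML Γ (B.iff B')) : ML Γ ((A.imp B).iff (A'.imp B')) :=
  iffI (imp_mono (iffE2 hA) (iffE1 hB)) (imp_mono (iffE1 hA) (iffE2 hB))

lemma neg_congr {Γ : Set (Formula α)} {A A' : Formula α} (hA : ML Γ (A.iff A')) :
    ML Γ (A.neg.iff A'.neg) := imp_congr hA iff_refl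

lemma and_mono {Γ : Set (Formula α)} {A A' B B' : Formula α} (hA : ML Γ (A.imp A'))
    (hB : ML Γ (B.imp B')) : ML Γ ((A.and B).imp (A'.and B')) :=
  .impI (.andI (.impE (weaken1 hA) (.andE1 hyp0)) (.impE (weaken1 hB) (.andE2 hyp0)))

lemma and_congr {Γ : Set (Formula α)} {A A' B B' : Formula α} (hA : ML Γ (A.iff A'))
    (hB : ML Γ (B.iff B')) : ML Γ ((A.and B).iff (A'.and B')) :=
  iffI (and_mono (iffE1 hA) (iffE1 hB)) (and_mono (iffE2 hA) (iffE2 hB))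

lemma or_mono {Γ : Set (Formula α)} {A A' B B' : Formula α} (hA : ML Γ (A.imp A'))
    (hB : ML Γ (B.imp B')) : ML Γ ((A.or B).imp (A'.or B')) :=
  .impI (.orE hyp0 (.orI1 (.impE (weaken1 (weaken1 hA)) hyp0))
    (.orI2 (.impE (weaken1 (weaken1 hB)) hyp0)))

lemma or_congr {Γ : Set (Formula α)} {A A' B B' : Formula α} (hA : ML Γ (A.iff A'))
    (hB : ML Γ (B.iff B')) : ML Γ ((A.or B).iff (A'.or B')) :=
  iffI (or_mono (iffE1 hA) (iffE1 hB)) (or_mono (iffE2 hA) (iffE2 hB))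

lemma all_mono {Γ : Set (Formula α)} {f g : α → Formula α}
    (h : ∀ a, ML Γ ((f a).imp (g a))) : ML Γ ((Formula.all f).imp (Formula.all g)) :=
  .impI (.allI fun a => .impE (weaken1 (h a)) (.allE a hyp0))

lemma all_congr {Γ : Set (Formula α)} {f g : α → Formula α}
    (h : ∀ a, ML Γ ((f a).iff (g a))) : ML Γ ((Formula.all f).iff (Formula.all g)) :=
  iffI (all_mono fun a => iffE1 (h a)) (all_mono fun a => iffE2 (h a))

lemma ex_mono {Γ : Set (Formula α)} {f g : α → Formula α}
    (h : ∀ a, ML Γ ((f a).imp (g a))) : ML Γ ((Formula.ex f).imp (Formula.ex g)) :=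
  .impI (.exE hyp0 fun a => .exI a (.impE (weaken1 (weaken1 (h a))) hyp0))

lemma ex_congr {Γ : Set (Formula α)} {f g : α → Formula α}
    (h : ∀ a, ML Γ ((f a).iff (g a))) : ML Γ ((Formula.ex f).iff (Formula.ex g)) :=
  iffI (ex_mono fun a => iffE1 (h a)) (ex_mono fun a => iffE2 (h a))

/-- `(A → ¬¬B) ↔ (¬B → ¬A)` minimally. -/
lemma imp_dni_iff_contra {Γ : Set (Formula α)} {A B : Formula α} :
    ML Γ ((A.imp B.neg.neg).iff (B.neg.imp A.neg)) :=
  iffI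
    (.impI (.impI (.impI (.impE (.impE hyp2 hyp0) hyp1))))
    (.impI (.impI (.impI (.impE (.impE hyp2 hyp0) hyp1))))

end ML

/-- `ML ⊢ A^{K6} ↔ A^{K7}` for every formula `A`. -/
theorem kurodaSix_iff_kurodaSeven {α : Type} (A : Formula α) :
    ML (∅ : Set (Formula α)) ((kurodaSix A).iff (kurodaSeven A)) := by
  induction A with
  | atom n ts => exact ML.iff_refl
  | bot => exact ML.iff_refl
  | and A B ihA ihB => exact ML.and_congr ihA ihB
  | or A B ihA ihB => exact ML.or_congr ihA ihB
  | imp A B ihA ihB =>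
      exact ML.iff_trans (ML.imp_congr ihA (ML.neg_congr (ML.neg_congr ihB)))
        ML.imp_dni_iff_contra
  | all f ih => exact ML.all_congr fun a => ML.neg_congr (ML.neg_congr (ih a))
  | ex f ih => exact ML.ex_congr fun a => ih a
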